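/- arXiv:1811.08385 — 3 statements merged into one kernel-verified Lean document; each statement's English description precedes it below -/
import Mathlib

section
/- For every nonnegative integer $k_2$, with $a = 6(1+k_2)(1+2k_2)(3+4k_2)$, $m_2 = 12k_2^2+18k_2+7$, $v_2^0 = 3+4k_2$, $v_2^\infty = 2(1+k_2)$, we have $\gcd((2m_2v_2^0+a)v_2^\infty,\ v_2^0+v_2^\infty) = 5+6k_2$. -/
theorem stmt_6 (k₂ : ℕ) (a m₂ v₂0 v₂inf : ℕ)
    (ha : a = 6 * (1 + k₂) * (1 + 2 * k₂) * (3 + 4 * k₂))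
    (hm : m₂ = 12 * k₂ ^ 2 + 18 * k₂ + 7)
    (hv0 : v₂0 = 3 + 4 * k₂) (hvinf : v₂inf = 2 * (1 + k₂)) :
    Nat.gcd ((2 * m₂ * v₂0 + a) * v₂inf) (v₂0 + v₂inf) = 5 + 6 * k₂ := by
  subst ha hm hv0 hvinf
  have h1 : (2 * (12 * k₂ ^ 2 + 18 * k₂ + 7) * (3 + 4 * k₂) +
      6 * (1 + k₂) * (1 + 2 * k₂) * (3 + 4 * k₂)) * (2 * (1 + k₂))
      = (5 + 6 * k₂) * (48 * k₂ ^ 3 + 116 * k₂ ^ 2 + 92 * k₂ + 24) := by ring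
  have h2 : 3 + 4 * k₂ + 2 * (1 + k₂) = 5 + 6 * k₂ := by ring
  rw [h1, h2, Nat.gcd_eq_right ⟨_, rfl⟩]
end

section
/- Let $w_1, w_2, v_3^0, v_3^\infty$ be positive reals. Then $\int_{-1}^1 \big((v_3^0 - v_3^\infty) - (v_3^0 + v_3^\infty)z\big)\big((w_1v_3^\infty + w_2v_3^0) + (w_1v_3^\infty - w_2v_3^0)z\big)^2\,dz = 0$ if and only if, setting $k = \frac{v_3^\infty w_1}{v_3^0 w_2}$, one has $3w_2k^3 + (2w_2-w_1)k^2 - (2w_1-w_2)k - 3w_1 = 0$. -/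
lemma integral_cubic (p q c d : ℝ) :
    (∫ z in (-1:ℝ)..1, (p + q * z) * (c + d * z) ^ 2)
      = 2 * (p * c ^ 2) + (2 / 3) * (p * d ^ 2 + 2 * q * c * d) := by
  have h : ∀ x : ℝ, HasDerivAt
      (fun z : ℝ => p * c ^ 2 * z + (2 * p * c * d + q * c ^ 2) * (z ^ 2 / 2)
        + (p * d ^ 2 + 2 * q * c * d) * (z ^ 3 / 3) + q * d ^ 2 * (z ^ 4 / 4))
      ((p + q * x) * (c + d * x) ^ 2) x := by
    intro x
    have h1 := (hasDerivAt_id x).const_mul (p * c ^ 2)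
    have h2 := ((hasDerivAt_pow 2 x).div_const 2).const_mul (2 * p * c * d + q * c ^ 2)
    have h3 := ((hasDerivAt_pow 3 x).div_const 3).const_mul (p * d ^ 2 + 2 * q * c * d)
    have h4 := ((hasDerivAt_pow 4 x).div_const 4).const_mul (q * d ^ 2)
    convert ((h1.add h2).add h3).add h4 using 1
    · rfl
    · rfl
    · rfl
    · norm_num
      ring
  rw [intervalIntegral.integral_eq_sub_of_hasDerivAt (fun x _ => h x)
    ((Continuous.intervalIntegrable (by continuity) _ _))]
  ring

theorem stmt_9 (w₁ w₂ v₃0 v₃inf : ℝ) (hw₁ : 0 < w₁) (hw₂ : 0 < w₂)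
    (hv0 : 0 < v₃0) (hvinf : 0 < v₃inf) (k : ℝ) (hk : k = (v₃inf * w₁) / (v₃0 * w₂)) :
    (∫ z in (-1:ℝ)..1,
        ((v₃0 - v₃inf) - (v₃0 + v₃inf) * z) *
          ((w₁ * v₃inf + w₂ * v₃0) + (w₁ * v₃inf - w₂ * v₃0) * z) ^ 2) = 0 ↔
    3 * w₂ * k ^ 3 + (2 * w₂ - w₁) * k ^ 2 - (2 * w₁ - w₂) * k - 3 * w₁ = 0 := by
  have hB : (v₃0 * w₂) ≠ 0 := by positivity
  have hint := integral_cubic (v₃0 - v₃inf) (-(v₃0 + v₃inf))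
      (w₁ * v₃inf + w₂ * v₃0) (w₁ * v₃inf - w₂ * v₃0)
  have heq : (∫ z in (-1:ℝ)..1,
        ((v₃0 - v₃inf) - (v₃0 + v₃inf) * z) *
          ((w₁ * v₃inf + w₂ * v₃0) + (w₁ * v₃inf - w₂ * v₃0) * z) ^ 2)
      = (∫ z in (-1:ℝ)..1, ((v₃0 - v₃inf) + (-(v₃0 + v₃inf)) * z) *
          ((w₁ * v₃inf + w₂ * v₃0) + (w₁ * v₃inf - w₂ * v₃0) * z) ^ 2) := by
    congr 1; funext z; ring
  rw [heq, hint]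
  set E := 2 * ((v₃0 - v₃inf) * (w₁ * v₃inf + w₂ * v₃0) ^ 2) +
      2 / 3 * ((v₃0 - v₃inf) * (w₁ * v₃inf - w₂ * v₃0) ^ 2 +
        2 * (-(v₃0 + v₃inf)) * (w₁ * v₃inf + w₂ * v₃0) * (w₁ * v₃inf - w₂ * v₃0)) with hE
  have key : 3 * w₂ * k ^ 3 + (2 * w₂ - w₁) * k ^ 2 - (2 * w₁ - w₂) * k - 3 * w₁
      = (-(3 * (w₁ * w₂)) / (4 * (v₃0 * w₂) ^ 3)) * E := by
    rw [hk, hE]; field_simp; ring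
  rw [key]
  have hc : (-(3 * (w₁ * w₂)) / (4 * (v₃0 * w₂) ^ 3)) ≠ 0 := by
    apply div_ne_zero
    · simp only [neg_ne_zero]; positivity
    · positivity
  constructor
  · intro h; rw [h, mul_zero]
  · intro h; exact (mul_eq_zero.mp h).resolve_left hc
end

section
/- Let $k > 1$ be rational. Then there exist coprime positive integers $w_1 > w_2$ with $\frac{w_2}{w_1} = \frac{3 + 2k + k^2}{k(1 + 2k + 3k^2)}$, and for these, $k$ is a root of $3w_2k^3 + (2w_2 - w_1)k^2 - (2w_1 - w_2)k - 3w_1 = 0$. -/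
theorem stmt_16 (k : ℚ) (hk : 1 < k) :
    ∃ w₁ w₂ : ℕ, 0 < w₂ ∧ w₂ < w₁ ∧ Nat.Coprime w₁ w₂ ∧
      (w₂ : ℚ) / w₁ = (3 + 2 * k + k ^ 2) / (k * (1 + 2 * k + 3 * k ^ 2)) ∧
      3 * w₂ * k ^ 3 + (2 * (w₂ : ℚ) - w₁) * k ^ 2 - (2 * (w₁ : ℚ) - w₂) * k - 3 * w₁ = 0 := by
  have hk0 : (0:ℚ) < k := by linarith
  have hden : (0:ℚ) < k * (1 + 2 * k + 3 * k ^ 2) := by nlinarith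
  set r : ℚ := (3 + 2 * k + k ^ 2) / (k * (1 + 2 * k + 3 * k ^ 2)) with hr
  have hrpos : 0 < r := by
    apply div_pos (by nlinarith) hden
  have hr1 : r < 1 := by
    rw [hr, div_lt_one hden]
    nlinarith
  have hnum : 0 < r.num := Rat.num_pos.mpr hrpos
  refine ⟨r.den, r.num.toNat, ?_, ?_, ?_, ?_, ?_⟩
  · omega
  · have h1 : (r.num : ℚ) < r.den := by
      have hnd := Rat.num_div_den r
      have hd : (0:ℚ) < (r.den : ℚ) := by exact_mod_cast r.pos
      have h2 : (r.num : ℚ) / r.den < 1 := by rw [hnd]; exact hr1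
      rwa [div_lt_one hd] at h2
    have : r.num < (r.den : ℤ) := by exact_mod_cast h1
    omega
  · have := r.reduced
    have h : r.num.natAbs = r.num.toNat := by omega
    rw [h] at this
    exact this.symm
  · have : (r.num.toNat : ℚ) = (r.num : ℚ) := by
      exact_mod_cast Int.toNat_of_nonneg hnum.le
    rw [this, Rat.num_div_den]
  · have heq : ((r.num.toNat : ℚ)) / r.den = r := by
      have : (r.num.toNat : ℚ) = (r.num : ℚ) := by
        exact_mod_cast Int.toNat_of_nonneg hnum.le
      rw [this, Rat.num_div_den]
    rw [hr] at heq
    have hd : ((r.den : ℚ)) ≠ 0 := by exact_mod_cast r.den_ne_zero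
    rw [div_eq_div_iff hd hden.ne'] at heq
    linear_combination heq
end
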